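/- arXiv:1504.04404 — 7 statements merged into one kernel-verified Lean document; each statement's English description precedes it below -/
import Mathlib

section
/- Let C n satisfy C 0 = 1, C 1 = 4, C n = 3 C(n-1) + 2 C(n-2), and let D n = 1, 4 for n = 0, 1 and D n = 13*4^n/8 - 2*2^n + 1 for n ≥ 2 (here 13*4^n/8 is an integer since n ≥ 2). Then the density C n / D n tends to 0 as n → ∞, i.e., Filter.Tendsto (fun n => (C n : ℝ) / (D n : ℝ)) Filter.atTop (nhds 0). -/
def C : ℕ → ℕ
  | 0 => 1
  | 1 => 4
  | n + 2 => 3 * C (n + 1) + 2 * C n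

def D (n : ℕ) : ℕ :=
  if n = 0 then 1 else if n = 1 then 4 else 13 * 4 ^ n / 8 - 2 * 2 ^ n + 1

lemma C_le : ∀ n, (C n : ℝ) ≤ 4 * (37/10) ^ n := by
  have key : ∀ n, (C n : ℝ) ≤ 4 * (37/10) ^ n ∧ (C (n+1) : ℝ) ≤ 4 * (37/10) ^ (n+1) := by
    intro n
    induction n with
    | zero => norm_num [C]
    | succ k ih =>
      refine ⟨ih.2, ?_⟩
      have h1 := ih.1
      have h2 := ih.2
      show ((3 * C (k+1) + 2 * C k : ℕ) : ℝ) ≤ _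
      push_cast
      have : (3:ℝ) * C (k+1) + 2 * C k ≤ 3 * (4 * (37/10)^(k+1)) + 2 * (4 * (37/10)^k) := by
        nlinarith
      refine this.trans ?_
      have hp : (0:ℝ) < (37/10)^k := by positivity
      ring_nf
      nlinarith
  exact fun n => (key n).1

lemma D_ge : ∀ n, 2 ≤ n → (4:ℝ) ^ n ≤ (D n : ℝ) := by
  intro n hn
  obtain ⟨m, rfl⟩ := Nat.exists_eq_add_of_le hn
  have hD : D (2 + m) = 26 * 4 ^ m - 8 * 2 ^ m + 1 := by
    simp only [D]
    rw [if_neg (by omega), if_neg (by omega)]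
    have h4 : (4:ℕ) ^ (2 + m) = 16 * 4 ^ m := by rw [pow_add]; ring
    have h2 : (2:ℕ) ^ (2 + m) = 4 * 2 ^ m := by rw [pow_add]; ring
    rw [h4, h2]
    omega
  have h1 : (2:ℕ) ^ m ≤ 4 ^ m := Nat.pow_le_pow_left (by norm_num) m
  have h2 : 1 ≤ (2:ℕ) ^ m := Nat.one_le_two_pow
  have hnat : (4:ℕ) ^ (2 + m) ≤ D (2 + m) := by
    rw [hD, pow_add]
    omega
  exact_mod_cast Nat.cast_le.mpr hnat

theorem density_tendsto_zero :
    Filter.Tendsto (fun n => (C n : ℝ) / (D n : ℝ)) Filter.atTop (nhds 0) := by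
  have hg : Filter.Tendsto (fun n : ℕ => 4 * (37/40 : ℝ) ^ n) Filter.atTop (nhds 0) := by
    have := tendsto_pow_atTop_nhds_zero_of_lt_one (by norm_num : (0:ℝ) ≤ 37/40)
      (by norm_num : (37/40:ℝ) < 1)
    simpa using this.const_mul (4:ℝ)
  refine squeeze_zero' ?_ ?_ hg
  · filter_upwards with n; positivity
  · filter_upwards [Filter.eventually_atTop.mpr ⟨2, fun n hn => hn⟩] with n hn
    have hD := D_ge n hn
    have hC := C_le n
    have h4 : (0:ℝ) < 4 ^ n := by positivity
    have hDpos : (0:ℝ) < D n := lt_of_lt_of_le h4 hD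
    have : (C n : ℝ) / D n ≤ (4 * (37/10)^n) / 4 ^ n := by
      apply div_le_div₀ (by positivity) hC h4 hD
    refine this.trans_eq ?_
    rw [mul_div_assoc, ← div_pow]
    norm_num
end

section
/- Define E : ℕ → ℕ by E 0 = 1, E 1 = 4, and E n = 2 * C (n-1) + E (n-2) + 2^(n-1) for n ≥ 2, where C satisfies C 0 = 1, C 1 = 4, C n = 3 C(n-1) + 2 C(n-2). Then for all n, (E n : ℝ) = ((17 + 7*Real.sqrt 17)/68) * ((3 + Real.sqrt 17)/2)^n + ((17 - 7*Real.sqrt 17)/68) * ((3 - Real.sqrt 17)/2)^n + (2^(n+2) - (-1)^n)/6. -/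
def E : ℕ → ℕ
  | 0 => 1
  | 1 => 4
  | n + 2 => 2 * C (n + 1) + E n + 2 ^ (n + 1)

lemma sqrt17_sq : Real.sqrt 17 ^ 2 = 17 := Real.sq_sqrt (by norm_num)

lemma C_closed (n : ℕ) :
    (C n : ℝ) = ((17 + 5 * Real.sqrt 17) / 34) * ((3 + Real.sqrt 17) / 2) ^ n
      + ((17 - 5 * Real.sqrt 17) / 34) * ((3 - Real.sqrt 17) / 2) ^ n := by
  set s := Real.sqrt 17 with hsdef
  have hs : s ^ 2 = 17 := sqrt17_sq
  induction n using Nat.twoStepInduction with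
  | zero => simp [C]; ring
  | one => simp [C]; linear_combination (-(5:ℝ)/34) * hs
  | more n ih1 ih2 =>
    have : (C (n+2) : ℝ) = 3 * (C (n+1) : ℝ) + 2 * (C n : ℝ) := by
      rw [show C (n+2) = 3 * C (n+1) + 2 * C n from rfl]; push_cast; ring
    rw [this, ih1, ih2]
    linear_combination (-(((17 + 5*s) * ((3+s)/2)^n + (17 - 5*s) * ((3-s)/2)^n)/136)) * hs

theorem E_closed_form (n : ℕ) :
    (E n : ℝ) = ((17 + 7 * Real.sqrt 17) / 68) * ((3 + Real.sqrt 17) / 2) ^ n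
      + ((17 - 7 * Real.sqrt 17) / 68) * ((3 - Real.sqrt 17) / 2) ^ n
      + (2 ^ (n + 2) - (-1 : ℝ) ^ n) / 6 := by
  set s := Real.sqrt 17 with hsdef
  have hs : s ^ 2 = 17 := sqrt17_sq
  induction n using Nat.twoStepInduction with
  | zero => simp [E]; ring
  | one => simp [E]; linear_combination (-(7:ℝ)/68) * hs
  | more n ih1 ih2 =>
    have hE : (E (n+2) : ℝ) = 2 * (C (n+1) : ℝ) + (E n : ℝ) + 2 ^ (n+1) := by
      rw [show E (n+2) = 2 * C (n+1) + E n + 2^(n+1) from rfl]; push_cast; ring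
    rw [hE, ih1, C_closed]
    linear_combination (-((((3+s)/2)^n * (7*s + 19) + ((3-s)/2)^n * (19 - 7*s))/272)) * hs
end

section
/- Let E n satisfy E 0 = 1, E 1 = 4, E n = 2 * C(n-1) + E(n-2) + 2^(n-1), where C 0 = 1, C 1 = 4, C n = 3 C(n-1) + 2 C(n-2). Then Filter.Tendsto (fun n => (E n : ℝ) / (4 : ℝ)^n) Filter.atTop (nhds 0). -/
lemma C_bound : ∀ n, 5 ^ n * C n ≤ 4 * 18 ^ n ∧ 5 ^ (n + 1) * C (n + 1) ≤ 4 * 18 ^ (n + 1) := by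
  intro n
  induction n with
  | zero => simp [C]
  | succ k ih =>
    refine ⟨ih.2, ?_⟩
    have h1 := ih.1
    have h2 := ih.2
    show 5 ^ (k + 2) * C (k + 2) ≤ 4 * 18 ^ (k + 2)
    rw [show C (k + 2) = 3 * C (k + 1) + 2 * C k from rfl]
    have e1 : (5:ℕ) ^ (k + 1) = 5 * 5 ^ k := by ring
    have e2 : (5:ℕ) ^ (k + 2) = 25 * 5 ^ k := by ring
    have e3 : (18:ℕ) ^ (k + 1) = 18 * 18 ^ k := by ring
    have e4 : (18:ℕ) ^ (k + 2) = 324 * 18 ^ k := by ring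
    rw [e2, e4]
    rw [e1, e3] at h2
    have key : 25 * 5 ^ k * (3 * C (k + 1) + 2 * C k)
        = 15 * (5 * 5 ^ k * C (k + 1)) + 50 * (5 ^ k * C k) := by ring
    rw [key]
    zify at h1 h2 ⊢
    linarith [h1, h2, pow_pos (show (0:ℤ) < 18 by norm_num) k]

lemma E_bound : ∀ n, 5 ^ n * E n ≤ 4 * 18 ^ n ∧ 5 ^ (n + 1) * E (n + 1) ≤ 4 * 18 ^ (n + 1) := by
  intro n
  induction n with
  | zero => simp [E]
  | succ k ih =>
    refine ⟨ih.2, ?_⟩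
    have h1 := ih.1
    have hc := (C_bound k).2
    show 5 ^ (k + 2) * E (k + 2) ≤ 4 * 18 ^ (k + 2)
    rw [show E (k + 2) = 2 * C (k + 1) + E k + 2 ^ (k + 1) from rfl]
    have e1 : (5:ℕ) ^ (k + 1) = 5 * 5 ^ k := by ring
    have e2 : (5:ℕ) ^ (k + 2) = 25 * 5 ^ k := by ring
    have e3 : (18:ℕ) ^ (k + 1) = 18 * 18 ^ k := by ring
    have e4 : (18:ℕ) ^ (k + 2) = 324 * 18 ^ k := by ring
    have e5 : (2:ℕ) ^ (k + 1) = 2 * 2 ^ k := by ring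
    have h10 : (10:ℕ) ^ k ≤ 18 ^ k := Nat.pow_le_pow_left (by norm_num) k
    have h10' : (5:ℕ) ^ k * 2 ^ k = 10 ^ k := by rw [← Nat.mul_pow]
    rw [e2, e4, e5]
    rw [e1, e3] at hc
    have key : 25 * 5 ^ k * (2 * C (k + 1) + E k + 2 * 2 ^ k)
        = 10 * (5 * 5 ^ k * C (k + 1)) + 25 * (5 ^ k * E k) + 50 * (5 ^ k * 2 ^ k) := by ring
    rw [key, h10']
    zify at h1 hc h10 ⊢
    linarith [h1, hc, h10, pow_pos (show (0:ℤ) < 18 by norm_num) k]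

theorem density_rows_tendsto_zero :
    Filter.Tendsto (fun n => (E n : ℝ) / (4 : ℝ) ^ n) Filter.atTop (nhds 0) := by
  have hle : ∀ n, (E n : ℝ) / (4 : ℝ) ^ n ≤ 4 * (9 / 10 : ℝ) ^ n := by
    intro n
    have h := (E_bound n).1
    have hR : ((5:ℝ) ^ n) * (E n : ℝ) ≤ 4 * 18 ^ n := by
      exact_mod_cast h
    have h4 : (0:ℝ) < 4 ^ n := by positivity
    have h5 : (0:ℝ) < 5 ^ n := by positivity
    rw [div_le_iff₀ h4]
    have e1 : (4:ℝ) ^ n * 5 ^ n * 9 ^ n = 180 ^ n := by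
      rw [← mul_pow, ← mul_pow]; norm_num
    have e2 : (10:ℝ) ^ n * 18 ^ n = 180 ^ n := by
      rw [← mul_pow]; norm_num
    have : (4:ℝ) * (9 / 10) ^ n * 4 ^ n = 4 * 18 ^ n / 5 ^ n := by
      rw [div_pow, eq_div_iff (ne_of_gt h5)]
      field_simp
      nlinarith [e1, e2]
    rw [this, le_div_iff₀ h5]
    nlinarith [hR]
  have h0 : ∀ n, (0:ℝ) ≤ (E n : ℝ) / (4 : ℝ) ^ n := by
    intro n; positivity
  have htend : Filter.Tendsto (fun n => (4:ℝ) * (9 / 10 : ℝ) ^ n) Filter.atTop (nhds 0) := by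
    have := tendsto_pow_atTop_nhds_zero_of_lt_one (by norm_num : (0:ℝ) ≤ 9/10) (by norm_num : (9/10:ℝ) < 1)
    simpa using this.const_mul (4:ℝ)
  exact squeeze_zero h0 hle htend
end

section
/- The solution of the recurrence C n = 3 C(n-1) + 2 C(n-2), C 0 = 1, C 1 = 4, satisfies: Filter.Tendsto (fun n => (C (n+1) : ℝ) / (C n : ℝ)) Filter.atTop (nhds ((3 + Real.sqrt 17)/2)). -/
theorem C_ratio_limit :
    Filter.Tendsto (fun n => (C (n + 1) : ℝ) / (C n : ℝ)) Filter.atTop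
      (nhds ((3 + Real.sqrt 17) / 2)) := by
  set s : ℝ := Real.sqrt 17 with hs_def
  have hs2 : s ^ 2 = 17 := Real.sq_sqrt (by norm_num)
  have hs4 : 4 < s := by nlinarith [Real.sqrt_nonneg (17:ℝ)]
  have hsne : s ≠ 0 := by positivity
  set φ : ℝ := (3 + s) / 2 with hφdef
  set ψ : ℝ := (3 - s) / 2 with hψdef
  set a : ℝ := (5 + s) / (2 * s) with hadef
  set b : ℝ := (s - 5) / (2 * s) with hbdef
  have hφpos : 0 < φ := by rw [hφdef]; linarith
  have ha : 0 < a := by rw [hadef]; positivity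
  have hφsq : φ ^ 2 = 3 * φ + 2 := by rw [hφdef]; linear_combination hs2 / 4
  have hψsq : ψ ^ 2 = 3 * ψ + 2 := by rw [hψdef]; linear_combination hs2 / 4
  have key2 : ∀ n, (2 * s * (C n : ℝ) = (5 + s) * φ ^ n + (s - 5) * ψ ^ n) ∧
      (2 * s * (C (n + 1) : ℝ) = (5 + s) * φ ^ (n + 1) + (s - 5) * ψ ^ (n + 1)) := by
    intro n
    induction n with
    | zero =>
      constructor
      · show 2 * s * ((1 : ℕ) : ℝ) = (5 + s) * φ ^ 0 + (s - 5) * ψ ^ 0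
        push_cast; ring
      · show 2 * s * ((4 : ℕ) : ℝ) = (5 + s) * φ ^ 1 + (s - 5) * ψ ^ 1
        push_cast
        rw [hφdef, hψdef]
        ring
    | succ n ih =>
      refine ⟨ih.2, ?_⟩
      have hC : (C (n + 2) : ℝ) = 3 * (C (n + 1) : ℝ) + 2 * (C n : ℝ) := by
        show ((3 * C (n + 1) + 2 * C n : ℕ) : ℝ) = _
        push_cast; ring
      rw [hC]
      linear_combination 3 * ih.2 + 2 * ih.1
        - (((5 + s) * φ ^ n + (s - 5) * ψ ^ n) / 4) * hs2
  have key : ∀ n, (C n : ℝ) = a * φ ^ n + b * ψ ^ n := by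
    intro n
    have h := (key2 n).1
    rw [hadef, hbdef]
    field_simp
    linear_combination h
  have hr : |ψ / φ| < 1 := by
    rw [abs_div, abs_of_pos hφpos, div_lt_one hφpos, hψdef, hφdef]
    rw [abs_of_neg (by linarith : (3 - s) / 2 < 0)]
    linarith
  have h0 : Filter.Tendsto (fun n => (ψ / φ) ^ n) Filter.atTop (nhds 0) :=
    tendsto_pow_atTop_nhds_zero_of_abs_lt_one hr
  have hmain : Filter.Tendsto
      (fun n => (a * φ + b * ψ * (ψ / φ) ^ n) / (a + b * (ψ / φ) ^ n))
      Filter.atTop (nhds ((a * φ + b * ψ * 0) / (a + b * 0))) := by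
    apply Filter.Tendsto.div
    · exact tendsto_const_nhds.add (tendsto_const_nhds.mul h0)
    · exact tendsto_const_nhds.add (tendsto_const_nhds.mul h0)
    · simp [ha.ne']
  have hval : (a * φ + b * ψ * 0) / (a + b * 0) = φ := by
    field_simp
    rw [mul_zero, add_zero, mul_zero, add_zero]
    exact mul_div_cancel_left₀ φ ha.ne'
  rw [hval] at hmain
  apply hmain.congr
  intro n
  have hφn : φ ^ n ≠ 0 := pow_ne_zero _ hφpos.ne'
  rw [key n, key (n + 1)]
  rw [← mul_div_mul_right (a * φ + b * ψ * (ψ / φ) ^ n) (a + b * (ψ / φ) ^ n) hφn,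
    div_pow]
  congr 1 <;> field_simp <;> ring
end

section
/- Let r n k = R n k % 2 be the Pascal rhombus mod 2. The diagonal D_0, given by r n (-(n:ℤ) + 1) for n ≥ 1, is constant: r n (1 - n) = 1 for all n ≥ 1. -/
def R : ℕ → ℤ → ℕ
  | 0, _ => 0
  | 1, k => if k = 0 then 1 else 0
  | n + 2, k => R (n + 1) (k - 1) + R (n + 1) k + R (n + 1) (k + 1) + R n k

lemma R_zero : ∀ n : ℕ, ∀ k : ℤ, k < 1 - (n : ℤ) → R n k = 0 := by
  intro n
  induction n using Nat.strong_induction_on with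
  | _ n ih =>
    match n with
    | 0 => intro k _; rfl
    | 1 =>
      intro k hk
      simp only [R]
      rw [if_neg]; omega
    | n + 2 =>
      intro k hk
      simp only [R]
      rw [ih (n+1) (by omega) (k-1) (by push_cast; omega),
          ih (n+1) (by omega) k (by push_cast; omega),
          ih (n+1) (by omega) (k+1) (by push_cast; omega),
          ih n (by omega) k (by push_cast; omega)]

lemma R_edge : ∀ n : ℕ, R (n + 1) (-(n : ℤ)) = 1 := by
  intro n
  induction n with
  | zero => rfl
  | succ m ih =>
    show R (m + 2) _ = 1
    simp only [R]
    rw [R_zero (m+1) _ (by push_cast; omega),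
        R_zero (m+1) _ (by push_cast; omega),
        R_zero m _ (by push_cast; omega)]
    have : (-(((m+1:ℕ)):ℤ) + 1) = -(m:ℤ) := by push_cast; ring
    rw [this, ih]

theorem diagonal_zero_constant (n : ℕ) (hn : 1 ≤ n) : R n (1 - (n : ℤ)) % 2 = 1 := by
  obtain ⟨m, rfl⟩ := Nat.exists_eq_add_of_le hn
  have h : (1 - ((1 + m : ℕ) : ℤ)) = -(m : ℤ) := by push_cast; ring
  rw [h, show 1 + m = m + 1 by omega, R_edge]
end

section
/- Let r n k = R n k % 2 be the Pascal rhombus mod 2. For all n ≥ 1, and all (i, j) with 1 ≤ i ≤ 2^(n-1) and |j| ≤ i - 1 (cells of the triangle with apex (1,0) and base row 2^(n-1)): r i j = r (2^n + i) (-(2^n : ℤ) + j) and r i j = r (2^n + i) ((2^n : ℤ) + j). -/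
abbrev A2 : Type := AddMonoidAlgebra (ZMod 2) ℤ

noncomputable def Tt (a : ℤ) : A2 := AddMonoidAlgebra.single a 1

noncomputable def cc : A2 := Tt 1 + 1 + Tt (-1)

noncomputable def U : ℕ → A2
  | 0 => 0
  | 1 => 1
  | n + 2 => cc * U (n + 1) + U n

lemma Tt_mul_Tt (a b : ℤ) : Tt a * Tt b = Tt (a + b) := by
  rw [Tt, Tt, Tt, AddMonoidAlgebra.single_mul_single, one_mul]

lemma self_add_self (x : A2) : x + x = 0 := by
  ext k
  simp only [AddMonoidAlgebra.coeff_add, AddMonoidAlgebra.coeff_zero, Finsupp.add_apply, Finsupp.coe_zero, Pi.zero_apply]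
  exact CharTwo.add_self_eq_zero _

lemma sq_add (x y : A2) : (x + y) ^ 2 = x ^ 2 + y ^ 2 := by
  have h : (x + y) ^ 2 = x ^ 2 + y ^ 2 + (x * y + x * y) := by ring
  rw [h, self_add_self, add_zero]

lemma U_zero : U 0 = 0 := rfl
lemma U_one : U 1 = 1 := rfl
lemma U_step (n : ℕ) : U (n + 2) = cc * U (n + 1) + U n := rfl
lemma U_two : U 2 = cc := by rw [U_step, U_one, U_zero, mul_one, add_zero]

lemma U_congr {a b : ℕ} (h : a = b) : U a = U b := congrArg U h

lemma U_add (b a : ℕ) : U (a + b + 1) = U (a + 1) * U (b + 1) + U a * U b := by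
  induction a using Nat.twoStepInduction with
  | zero => rw [U_congr (show 0 + b + 1 = b + 1 by ring), U_zero, U_one, zero_mul, one_mul, add_zero]
  | one =>
    rw [U_congr (show 1 + b + 1 = b + 2 by ring), U_step, U_two, U_one, one_mul]
  | more a ih1 ih2 =>
    have ha2 : U (a + 2) = cc * U (a + 1) + U a := U_step a
    have ha3 : U (a + 2 + 1) = cc * U (a + 2) + U (a + 1) := U_step (a + 1)
    have hL : U (a + 2 + b + 1) = cc * U (a + 1 + b + 1) + U (a + b + 1) := by
      rw [U_congr (show a + 2 + b + 1 = (a + b + 1) + 2 by ring), U_step,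
        U_congr (show a + b + 1 + 1 = a + 1 + b + 1 by ring)]
    rw [hL, ih1, ih2, ha3, U_congr (show a + 1 + 1 = a + 2 by ring), ha2]
    ring

lemma U_cassini (m : ℕ) : U (m + 2) * U m + U (m + 1) ^ 2 = 1 := by
  induction m with
  | zero => rw [U_zero, U_one, mul_zero, one_pow, zero_add]
  | succ m ih =>
    have key : U (m + 1 + 2) * U (m + 1) + U (m + 1 + 1) ^ 2
        = U (m + 2) * U m + U (m + 1) ^ 2 + (cc * (U (m+2) * U (m+1)) + cc * (U (m+2) * U (m+1))) := by
      rw [U_congr (show m + 1 + 2 = (m + 1) + 2 by ring), U_step (m + 1),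
        U_congr (show m + 1 + 1 = m + 2 by ring), U_step m]
      ring
    rw [key, self_add_self, add_zero, ih]

lemma U_sub (i : ℕ) : ∀ d : ℕ, U d = U (d + i) * U (i + 1) + U (d + i + 1) * U i := by
  induction i using Nat.twoStepInduction with
  | zero => intro d; rw [U_zero, U_one, mul_zero, add_zero, add_zero, mul_one]
  | one =>
    intro d
    rw [U_two, U_one, mul_one, U_congr (show d + 1 + 1 = d + 2 by ring), U_step]
    have h : U (d + 1) * cc + (cc * U (d + 1) + U d) = U d + (cc * U (d+1) + cc * U (d+1)) := by ring
    rw [h, self_add_self, add_zero]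
  | more i ih1 ih2 =>
    intro d
    have e1 : U (i + 2 + 1) = cc * U (i + 2) + U (i + 1) := U_step (i + 1)
    have e3 : U (d + (i + 2) + 1) = cc * U (d + (i + 1) + 1) + U (d + (i + 1)) := by
      rw [U_congr (show d + (i + 2) + 1 = (d + (i + 1)) + 2 by ring), U_step,
        U_congr (show d + (i + 1) + 1 = d + (i + 1) + 1 by ring)]
    have e4 : U (d + (i + 2)) = U (d + (i + 1) + 1) := U_congr (by ring)
    rw [e4, e1, e3]
    have h : U (d + (i+1) + 1) * (cc * U (i+2) + U (i+1)) +
        (cc * U (d+(i+1)+1) + U (d+(i+1))) * U (i+2)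
        = (U (d+(i+1)) * U (i+1+1) + U (d+(i+1)+1) * U (i+1)) +
          (cc * (U (d+(i+1)+1) * U (i+2)) + cc * (U (d+(i+1)+1) * U (i+2))) := by
      rw [U_congr (show i + 1 + 1 = i + 2 by ring)]; ring
    rw [h, self_add_self, add_zero]
    exact ih2 d

lemma eq_of_add_eq_zero' {x y : A2} (h : x + y = 0) : x = y := by
  have : x + (y + y) = (x + y) + y := by ring
  rw [self_add_self, h, zero_add, add_zero] at this
  exact this

noncomputable def tk (k : ℕ) : A2 := Tt (2 ^ k) + 1 + Tt (-(2 ^ k))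

lemma tk_zero : tk 0 = cc := by
  rw [tk, cc]; norm_num

lemma tk_sq (k : ℕ) : tk k ^ 2 = tk (k + 1) := by
  rw [tk, tk, sq_add, sq_add]
  have h1 : Tt ((2:ℤ) ^ k) ^ 2 = Tt (2 ^ (k+1)) := by
    rw [sq, Tt_mul_Tt]; ring_nf
  have h2 : Tt (-(2:ℤ) ^ k) ^ 2 = Tt (-(2 ^ (k+1))) := by
    rw [sq, Tt_mul_Tt]; ring_nf
  rw [h1, h2, one_pow]

lemma Vaux : ∀ k j : ℕ, 2 ^ k = j + 1 → U (j + 2) + U j = tk k := by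
  intro k
  induction k with
  | zero =>
    intro j hj
    have hj0 : j = 0 := by omega
    subst hj0
    rw [U_two, U_zero, add_zero, tk_zero]
  | succ k ih =>
    intro j' hj'
    obtain ⟨j, hj⟩ : ∃ j, 2 ^ k = j + 1 := ⟨2 ^ k - 1, (Nat.succ_pred_eq_of_pos (pow_pos (by norm_num) k)).symm⟩
    have hj'2 : j' = 2 * j + 1 := by
      have : 2 ^ (k+1) = 2 * 2 ^ k := by ring
      omega
    subst hj'2
    have h3 : U (2 * j + 1 + 2) = U (j + 2) * U (j + 2) + U (j + 1) * U (j + 1) := by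
      rw [U_congr (show 2 * j + 1 + 2 = (j + 1) + (j + 1) + 1 by ring), U_add]
    have h1 : U (2 * j + 1) = U (j + 1) * U (j + 1) + U j * U j := by
      rw [U_congr (show 2 * j + 1 = j + j + 1 by ring), U_add]
    rw [h3, h1, ← tk_sq, ← ih j hj, sq_add]
    have : U (j + 2) * U (j + 2) + U (j + 1) * U (j + 1) + (U (j + 1) * U (j + 1) + U j * U j)
        = U (j + 2) ^ 2 + U j ^ 2 + (U (j+1) * U (j+1) + U (j+1) * U (j+1)) := by ring
    rw [this, self_add_self, add_zero]

lemma UA (k j : ℕ) (hj : 2 ^ k = j + 1) : U (2 * j + 2) = tk k * U (j + 1) := by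
  have h : U (2 * j + 2) = U (j + 1) * U (j + 2) + U j * U (j + 1) := by
    rw [U_congr (show 2 * j + 2 = j + (j + 1) + 1 by ring), U_add]
  rw [h, ← Vaux k j hj]; ring

lemma UB (k j : ℕ) (hj : 2 ^ k = j + 1) :
    U (2 * j + 1) = Tt (2 ^ (k+1)) + Tt (-(2 ^ (k+1))) + tk k * U (j + 2) := by
  apply eq_of_add_eq_zero'
  have h1 : U (2 * j + 1) = U (j + 1) * U (j + 1) + U j * U j := by
    rw [U_congr (show 2 * j + 1 = j + j + 1 by ring), U_add]
  have h2 : Tt ((2:ℤ) ^ (k+1)) + Tt (-((2:ℤ) ^ (k+1))) = tk (k+1) + 1 := by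
    apply eq_of_add_eq_zero'
    rw [tk]
    have e : Tt ((2:ℤ)^(k+1)) + Tt (-((2:ℤ)^(k+1))) + (Tt ((2:ℤ)^(k+1)) + 1 + Tt (-((2:ℤ)^(k+1))) + 1)
        = (Tt ((2:ℤ)^(k+1)) + Tt ((2:ℤ)^(k+1))) + ((Tt (-((2:ℤ)^(k+1))) + Tt (-((2:ℤ)^(k+1)))) + ((1:A2)+1)) := by ring
    rw [e, self_add_self, self_add_self, self_add_self, add_zero, add_zero]
  rw [h1, h2, ← tk_sq, ← Vaux k j hj, sq_add]
  have expand : U (j + 1) * U (j + 1) + U j * U j +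
      (U (j + 2) ^ 2 + U j ^ 2 + 1 + (U (j + 2) + U j) * U (j + 2))
      = (U (j + 2) * U j + U (j + 1) ^ 2) + 1 +
        ((U j ^ 2 + U j ^ 2) + (U (j + 2) ^ 2 + U (j + 2) ^ 2)) := by ring
  rw [expand, self_add_self, self_add_self, add_zero, add_zero, U_cassini, self_add_self]

lemma Umain (k : ℕ) (i : ℕ) (hi : i ≤ 2 ^ k) :
    U (2 ^ (k + 1) + i) =
      (Tt (2 ^ (k+1)) + Tt (-(2 ^ (k+1)))) * U i + tk k * U (2 ^ k - i) := by
  obtain ⟨j, hj⟩ : ∃ j, 2 ^ k = j + 1 := ⟨2 ^ k - 1, (Nat.succ_pred_eq_of_pos (pow_pos (by norm_num) k)).symm⟩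
  have hidx : U (2 ^ (k+1) + i) = U (2 * j + 2) * U (i + 1) + U (2 * j + 1) * U i := by
    rw [U_congr (show 2 ^ (k+1) + i = (2 * j + 1) + i + 1 by
      have : 2 ^ (k+1) = 2 * 2 ^ k := by ring
      omega), U_add]
  have hsub : U (2 ^ k - i) = U (2 ^ k) * U (i + 1) + U (2 ^ k + 1) * U i := by
    have hd : (2 ^ k - i) + i = 2 ^ k := Nat.sub_add_cancel hi
    have := U_sub i (2 ^ k - i)
    rw [hd] at this
    exact this
  rw [hidx, UA k j hj, UB k j hj, hsub, hj,
    U_congr (show j + 1 + 1 = j + 2 by ring)]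
  ring

lemma Tt_mul_apply (a : ℤ) (p : A2) (b : ℤ) : (Tt a * p).coeff b = p.coeff (b - a) := by
  rw [Tt, AddMonoidAlgebra.coeff_single_mul_apply, one_mul, neg_add_eq_sub]

lemma coeffU : ∀ i : ℕ, ∀ k : ℤ, (U i).coeff k = ((R i k : ℕ) : ZMod 2) := by
  intro i
  induction i using Nat.twoStepInduction with
  | zero =>
    intro k
    show (0 : A2).coeff k = ((R 0 k : ℕ) : ZMod 2)
    simp [R]
  | one =>
    intro k
    show (1 : A2).coeff k = ((R 1 k : ℕ) : ZMod 2)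
    rw [show (R 1 k) = if k = 0 then 1 else 0 from rfl]
    rw [AddMonoidAlgebra.one_def, AddMonoidAlgebra.coeff_single, Finsupp.single_apply]
    split_ifs with h1 h2 h2 <;> simp_all <;> omega
  | more n ih1 ih2 =>
    intro k
    have hU : U (n + 2) = Tt 1 * U (n + 1) + U (n + 1) + Tt (-1) * U (n + 1) + U n := by
      rw [U_step, cc]; ring
    have happ : (U (n + 2)).coeff k
        = (U (n+1)).coeff (k - 1) + (U (n+1)).coeff k + (U (n+1)).coeff (k - (-1)) + (U n).coeff k := by
      rw [hU]
      simp only [AddMonoidAlgebra.coeff_add, Finsupp.add_apply]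
      rw [Tt_mul_apply, Tt_mul_apply]
    rw [happ, show k - (-1) = k + 1 by ring, ih2, ih2, ih2, ih1]
    rw [show R (n + 2) k = R (n + 1) (k - 1) + R (n + 1) k + R (n + 1) (k + 1) + R n k from rfl]
    push_cast
    ring

lemma R_support : ∀ i : ℕ, ∀ k : ℤ, (i : ℤ) ≤ |k| → R i k = 0 := by
  intro i
  induction i using Nat.twoStepInduction with
  | zero => intro k _; rfl
  | one =>
    intro k hk
    have : k ≠ 0 := by
      rw [le_abs] at hk; push_cast at hk; omega
    exact if_neg this
  | more n ih1 ih2 =>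
    intro k hk
    rw [le_abs] at hk; push_cast at hk
    have h1 : ((n + 1 : ℕ) : ℤ) ≤ |k - 1| := by rw [le_abs]; push_cast; omega
    have h2 : ((n + 1 : ℕ) : ℤ) ≤ |k| := by rw [le_abs]; push_cast; omega
    have h3 : ((n + 1 : ℕ) : ℤ) ≤ |k + 1| := by rw [le_abs]; push_cast; omega
    have h0 : ((n : ℕ) : ℤ) ≤ |k| := by rw [le_abs]; push_cast; omega
    show R (n + 1) (k - 1) + R (n + 1) k + R (n + 1) (k + 1) + R n k = 0
    rw [ih2 _ h1, ih2 _ h2, ih2 _ h3, ih1 _ h0]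

theorem triangles_repeat (n : ℕ) (hn : 1 ≤ n) (i : ℕ) (j : ℤ)
    (hi1 : 1 ≤ i) (hi2 : i ≤ 2 ^ (n - 1)) (hj : |j| ≤ (i : ℤ) - 1) :
    R i j % 2 = R (2 ^ n + i) (-(2 ^ n : ℤ) + j) % 2 ∧
    R i j % 2 = R (2 ^ n + i) ((2 ^ n : ℤ) + j) % 2 := by
  obtain ⟨k, rfl⟩ : ∃ k, n = k + 1 := ⟨n - 1, by omega⟩
  simp only [Nat.add_sub_cancel] at hi2
  rw [abs_le] at hj
  have hik : (i : ℤ) ≤ 2 ^ k := by exact_mod_cast hi2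
  have hsubcast : ((2 ^ k - i : ℕ) : ℤ) = 2 ^ k - (i : ℤ) := by
    push_cast [Nat.cast_sub hi2]; ring
  have key := Umain k i hi2
  -- coefficient extraction helper
  have expand : ∀ K : ℤ, (U (2 ^ (k+1) + i)).coeff K
      = (U i).coeff (K - 2 ^ (k+1)) + (U i).coeff (K + 2 ^ (k+1))
        + ((U (2 ^ k - i)).coeff (K - 2 ^ k) + (U (2 ^ k - i)).coeff K + (U (2 ^ k - i)).coeff (K + 2 ^ k)) := by
    intro K
    have hexp : U (2 ^ (k+1) + i)
        = Tt (2 ^ (k+1)) * U i + Tt (-(2 ^ (k+1))) * U i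
          + (Tt (2 ^ k) * U (2 ^ k - i) + U (2 ^ k - i) + Tt (-(2 ^ k)) * U (2 ^ k - i)) := by
      rw [key, tk]; ring
    rw [hexp]
    simp only [AddMonoidAlgebra.coeff_add, Finsupp.add_apply]
    rw [Tt_mul_apply, Tt_mul_apply, Tt_mul_apply, Tt_mul_apply,
      show K - -(2 ^ (k+1) : ℤ) = K + 2 ^ (k+1) by ring,
      show K - -(2 ^ k : ℤ) = K + 2 ^ k by ring]
  have hpow : ((2:ℤ) ^ (k+1)) = 2 * 2 ^ k := by ring
  have hMpos : (i : ℤ) - 1 < 2 ^ k := by omega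
  constructor
  · apply (ZMod.natCast_eq_natCast_iff _ _ 2).mp
    rw [← coeffU, ← coeffU]
    rw [expand (-(2 ^ (k+1) : ℤ) + j)]
    rw [show -(2 ^ (k+1) : ℤ) + j - 2 ^ (k+1) = j - 2 * 2 ^ (k+1) by ring]
    rw [show -(2 ^ (k+1) : ℤ) + j + 2 ^ (k+1) = j by ring]
    rw [coeffU i (j - 2 * 2 ^ (k+1)), R_support i _ (by rw [le_abs]; omega)]
    rw [coeffU (2 ^ k - i), R_support _ _ (by rw [le_abs, hsubcast]; omega)]
    rw [coeffU (2 ^ k - i), R_support _ _ (by rw [le_abs, hsubcast]; omega)]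
    rw [coeffU (2 ^ k - i), R_support _ _ (by rw [le_abs, hsubcast]; omega)]
    push_cast
    ring
  · apply (ZMod.natCast_eq_natCast_iff _ _ 2).mp
    rw [← coeffU, ← coeffU]
    rw [expand ((2 ^ (k+1) : ℤ) + j)]
    rw [show (2 ^ (k+1) : ℤ) + j - 2 ^ (k+1) = j by ring]
    rw [show (2 ^ (k+1) : ℤ) + j + 2 ^ (k+1) = j + 2 * 2 ^ (k+1) by ring]
    rw [coeffU i (j + 2 * 2 ^ (k+1)), R_support i _ (by rw [le_abs]; omega)]
    rw [coeffU (2 ^ k - i), R_support _ _ (by rw [le_abs, hsubcast]; omega)]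
    rw [coeffU (2 ^ k - i), R_support _ _ (by rw [le_abs, hsubcast]; omega)]
    rw [coeffU (2 ^ k - i), R_support _ _ (by rw [le_abs, hsubcast]; omega)]
    push_cast
    ring
end

section
/- Let r n k = R n k % 2 be the Pascal rhombus mod 2. The number of k with |k| < 2^n and r (2^n) k = 1 equals (2^(n+2) - (-1)^n)/3 for all n ≥ 0; equivalently, 3 times this count equals 2^(n+2) - (-1)^n as an integer. -/
lemma R_zero_s16 (k : ℤ) : R 0 k = 0 := rfl
lemma R_one (k : ℤ) : R 1 k = if k = 0 then 1 else 0 := rfl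
lemma R_rec (n : ℕ) (k : ℤ) :
    R (n + 2) k = R (n + 1) (k - 1) + R (n + 1) k + R (n + 1) (k + 1) + R n k := rfl

lemma R_eq_zero : ∀ (n : ℕ) (k : ℤ), (n : ℤ) ≤ |k| → R n k = 0
  | 0, _, _ => rfl
  | 1, k, h => by
    rw [R_one]
    rw [le_abs] at h
    have : k ≠ 0 := by omega
    simp [this]
  | n + 2, k, h => by
    rw [le_abs] at h
    rw [R_rec, R_eq_zero (n+1) (k-1) (by rw [le_abs]; push_cast at h ⊢; omega),
      R_eq_zero (n+1) k (by rw [le_abs]; push_cast at h ⊢; omega),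
      R_eq_zero (n+1) (k+1) (by rw [le_abs]; push_cast at h ⊢; omega),
      R_eq_zero n k (by rw [le_abs]; push_cast at h ⊢; omega)]
lemma dbl : ∀ i : ℕ,
    (∀ j : ℤ, R (2*i) (2*j) % 2 = R i j % 2) ∧
    (∀ j : ℤ, R (2*i) (2*j+1) % 2 = (R i j + R i (j+1)) % 2) ∧
    (∀ j : ℤ, R (2*i+1) (2*j) % 2 = (R i j + R (i+1) j) % 2) ∧
    (∀ j : ℤ, R (2*i+1) (2*j+1) % 2 = 0) := by
  intro i
  induction i with
  | zero =>
    refine ⟨fun j => rfl, fun j => ?_, fun j => ?_, fun j => ?_⟩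
    · simp [R_zero_s16, R_one]
    · simp only [Nat.mul_zero, Nat.zero_add, R_one, R_zero_s16]
      by_cases h : j = 0
      · simp [h]
      · have h2 : (2:ℤ)*j ≠ 0 := by omega
        simp [h, h2]
    · have h2 : (2:ℤ)*j+1 ≠ 0 := by omega
      simp [R_one, h2]
  | succ i ih =>
    obtain ⟨ih1, ih2, ih3, ih4⟩ := ih
    have h1 : ∀ j : ℤ, R (2*i+2) (2*j) % 2 = R (i+1) j % 2 := by
      intro j
      have e := R_rec (2*i) (2*j)
      have a1 := ih4 (j-1)
      rw [show (2:ℤ)*(j-1)+1 = 2*j-1 by ring] at a1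
      have a2 := ih3 j
      have a3 := ih4 j
      have a4 := ih1 j
      omega
    have h2 : ∀ j : ℤ, R (2*i+2) (2*j+1) % 2 = (R (i+1) j + R (i+1) (j+1)) % 2 := by
      intro j
      have e := R_rec (2*i) (2*j+1)
      rw [show (2:ℤ)*j+1-1 = 2*j by ring, show (2:ℤ)*j+1+1 = 2*(j+1) by ring] at e
      have a1 := ih3 j
      have a2 := ih4 j
      have a3 := ih3 (j+1)
      have a4 := ih2 j
      omega
    have h3 : ∀ j : ℤ, R (2*i+3) (2*j) % 2 = (R (i+1) j + R (i+2) j) % 2 := by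
      intro j
      have e := R_rec (2*i+1) (2*j)
      rw [show 2*i+1+2 = 2*i+3 by omega, show 2*i+1+1 = 2*i+2 by omega] at e
      have a1 := h2 (j-1)
      rw [show (2:ℤ)*(j-1)+1 = 2*j-1 by ring, show j-1+1 = j by ring] at a1
      have a2 := h1 j
      have a3 := h2 j
      have a4 := ih3 j
      have e2 := R_rec i j
      omega
    have h4 : ∀ j : ℤ, R (2*i+3) (2*j+1) % 2 = 0 := by
      intro j
      have e := R_rec (2*i+1) (2*j+1)
      rw [show 2*i+1+2 = 2*i+3 by omega, show 2*i+1+1 = 2*i+2 by omega,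
        show (2:ℤ)*j+1-1 = 2*j by ring, show (2:ℤ)*j+1+1 = 2*(j+1) by ring] at e
      have a1 := h2 j
      have a2 := h1 j
      have a3 := h1 (j+1)
      have a4 := ih4 j
      omega
    refine ⟨?_, ?_, ?_, ?_⟩
    · intro j; rw [show 2*(i+1) = 2*i+2 by ring]; exact h1 j
    · intro j; rw [show 2*(i+1) = 2*i+2 by ring]; exact h2 j
    · intro j; rw [show 2*(i+1)+1 = 2*i+3 by ring]; exact h3 j
    · intro j; rw [show 2*(i+1)+1 = 2*i+3 by ring]; exact h4 j

open Finset

noncomputable def cntA (n : ℕ) : ℕ :=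
  ((Finset.Icc (-(2 ^ n : ℤ) + 1) ((2 ^ n : ℤ) - 1)).filter
    (fun k => R (2 ^ n) k % 2 = 1)).card

noncomputable def cntB (n : ℕ) : ℕ :=
  ((Finset.Icc (-(2 ^ n : ℤ)) ((2 ^ n : ℤ) - 1)).filter
    (fun k => (R (2 ^ n) k + R (2 ^ n) (k + 1)) % 2 = 1)).card

lemma inj2 : Function.Injective (fun j : ℤ => 2 * j) := fun a b h => by
  dsimp at h; omega

lemma inj21 : Function.Injective (fun j : ℤ => 2 * j + 1) := fun a b h => by
  dsimp at h; omega

lemma A_succ (n : ℕ) : cntA (n + 1) = cntA n + cntB n := by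
  classical
  unfold cntA cntB
  have hm : (0:ℤ) < 2 ^ n := by positivity
  have hp1 := (dbl (2^n)).1
  have hp2 := (dbl (2^n)).2.1
  have hpow : (2:ℝ) = 2 := rfl
  have hN : 2 ^ (n+1) = 2 * 2 ^ n := by ring
  have hZ : (2:ℤ) ^ (n+1) = 2 * 2 ^ n := by ring
  rw [hN, hZ]
  have hset : (Finset.Icc (-(2 * 2 ^ n : ℤ) + 1) ((2 * 2 ^ n : ℤ) - 1)).filter
        (fun k => R (2 * 2 ^ n) k % 2 = 1)
      = ((Finset.Icc (-(2 ^ n : ℤ) + 1) ((2 ^ n : ℤ) - 1)).filter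
          (fun k => R (2 ^ n) k % 2 = 1)).image (fun j => 2 * j)
        ∪ ((Finset.Icc (-(2 ^ n : ℤ)) ((2 ^ n : ℤ) - 1)).filter
          (fun k => (R (2 ^ n) k + R (2 ^ n) (k + 1)) % 2 = 1)).image (fun j => 2 * j + 1) := by
    ext k
    simp only [Finset.mem_filter, Finset.mem_Icc, Finset.mem_union, Finset.mem_image]
    constructor
    · rintro ⟨hk, hp⟩
      rcases Int.even_or_odd k with ⟨j, hj⟩ | ⟨j, hj⟩
      · left
        refine ⟨j, ⟨⟨by omega, by omega⟩, ?_⟩, by omega⟩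
        have := hp1 j
        rw [show (2:ℤ) * j = k by omega] at this
        omega
      · right
        refine ⟨j, ⟨⟨by omega, by omega⟩, ?_⟩, by omega⟩
        have := hp2 j
        rw [show (2:ℤ) * j + 1 = k by omega] at this
        omega
    · rintro (⟨j, ⟨hj, hpj⟩, rfl⟩ | ⟨j, ⟨hj, hpj⟩, rfl⟩)
      · have := hp1 j
        exact ⟨⟨by omega, by omega⟩, by omega⟩
      · have := hp2 j
        exact ⟨⟨by omega, by omega⟩, by omega⟩
  rw [hset, Finset.card_union_of_disjoint, Finset.card_image_of_injective _ inj2,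
    Finset.card_image_of_injective _ inj21]
  · rw [Finset.disjoint_left]
    rintro x hx hy
    simp only [Finset.mem_image] at hx hy
    obtain ⟨a, -, ha⟩ := hx
    obtain ⟨b, -, hb⟩ := hy
    omega

lemma cast_pow (n : ℕ) : ((2 ^ n : ℕ) : ℤ) = (2 : ℤ) ^ n := by push_cast; ring

lemma B_succ (n : ℕ) : cntB (n + 1) = 2 * cntA n := by
  classical
  unfold cntA cntB
  have hm : (0:ℤ) < 2 ^ n := by positivity
  have hp1 := (dbl (2^n)).1
  have hp2 := (dbl (2^n)).2.1
  have hN : 2 ^ (n+1) = 2 * 2 ^ n := by ring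
  have hZ : (2:ℤ) ^ (n+1) = 2 * 2 ^ n := by ring
  rw [hN, hZ]
  have hset : (Finset.Icc (-(2 * 2 ^ n : ℤ)) ((2 * 2 ^ n : ℤ) - 1)).filter
        (fun k => (R (2 * 2 ^ n) k + R (2 * 2 ^ n) (k + 1)) % 2 = 1)
      = ((Finset.Icc (-(2 ^ n : ℤ)) ((2 ^ n : ℤ) - 1)).filter
          (fun i => R (2 ^ n) (i + 1) % 2 = 1)).image (fun j => 2 * j)
        ∪ ((Finset.Icc (-(2 ^ n : ℤ)) ((2 ^ n : ℤ) - 1)).filter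
          (fun i => R (2 ^ n) i % 2 = 1)).image (fun j => 2 * j + 1) := by
    ext k
    simp only [Finset.mem_filter, Finset.mem_Icc, Finset.mem_union, Finset.mem_image]
    constructor
    · rintro ⟨hk, hp⟩
      rcases Int.even_or_odd k with ⟨j, hj⟩ | ⟨j, hj⟩
      · left
        refine ⟨j, ⟨⟨by omega, by omega⟩, ?_⟩, by omega⟩
        have e1 := hp1 j
        have e2 := hp2 j
        rw [show (2:ℤ) * j = k by omega] at e1 e2
        omega
      · right
        refine ⟨j, ⟨⟨by omega, by omega⟩, ?_⟩, by omega⟩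
        have e1 := hp2 j
        have e2 := hp1 (j+1)
        rw [show (2:ℤ) * j + 1 = k by omega] at e1
        rw [show (2:ℤ) * (j+1) = k + 1 by omega] at e2
        omega
    · rintro (⟨j, ⟨hj, hpj⟩, rfl⟩ | ⟨j, ⟨hj, hpj⟩, rfl⟩)
      · have e1 := hp1 j
        have e2 := hp2 j
        refine ⟨⟨by omega, by omega⟩, by omega⟩
      · have e1 := hp2 j
        have e2 := hp1 (j+1)
        rw [show (2:ℤ) * (j+1) = 2 * j + 1 + 1 by ring] at e2
        refine ⟨⟨by omega, by omega⟩, by omega⟩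
  rw [hset, Finset.card_union_of_disjoint, Finset.card_image_of_injective _ inj2,
    Finset.card_image_of_injective _ inj21]
  · have hSe : ((Finset.Icc (-(2 ^ n : ℤ)) ((2 ^ n : ℤ) - 1)).filter
          (fun i => R (2 ^ n) (i + 1) % 2 = 1)).image (fun i => i + 1)
        = (Finset.Icc (-(2 ^ n : ℤ) + 1) ((2 ^ n : ℤ) - 1)).filter
          (fun k => R (2 ^ n) k % 2 = 1) := by
      ext k
      simp only [Finset.mem_filter, Finset.mem_Icc, Finset.mem_image]
      constructor
      · rintro ⟨j, ⟨⟨h1, h2⟩, hp⟩, rfl⟩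
        by_cases hc : j + 1 = (2 ^ n : ℤ)
        · exfalso
          have hz := R_eq_zero (2^n) (j+1) (by rw [hc, ← cast_pow]; simp)
          omega
        · exact ⟨⟨by omega, by omega⟩, hp⟩
      · rintro ⟨⟨h1, h2⟩, hp⟩
        exact ⟨k - 1, ⟨⟨by omega, by omega⟩,
          by rw [show k - 1 + 1 = k by ring]; exact hp⟩, by ring⟩
    have hSo : ((Finset.Icc (-(2 ^ n : ℤ)) ((2 ^ n : ℤ) - 1)).filter
          (fun i => R (2 ^ n) i % 2 = 1))
        = (Finset.Icc (-(2 ^ n : ℤ) + 1) ((2 ^ n : ℤ) - 1)).filter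
          (fun k => R (2 ^ n) k % 2 = 1) := by
      ext k
      simp only [Finset.mem_filter, Finset.mem_Icc]
      constructor
      · rintro ⟨⟨h1, h2⟩, hp⟩
        by_cases hc : k = -(2 ^ n : ℤ)
        · exfalso
          have hz := R_eq_zero (2^n) k (by rw [hc, ← cast_pow]; simp)
          omega
        · exact ⟨⟨by omega, h2⟩, hp⟩
      · rintro ⟨⟨h1, h2⟩, hp⟩
        exact ⟨⟨by omega, h2⟩, hp⟩
    have hcard : ((Finset.Icc (-(2 ^ n : ℤ)) ((2 ^ n : ℤ) - 1)).filter
          (fun i => R (2 ^ n) (i + 1) % 2 = 1)).card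
        = ((Finset.Icc (-(2 ^ n : ℤ) + 1) ((2 ^ n : ℤ) - 1)).filter
          (fun k => R (2 ^ n) k % 2 = 1)).card := by
      rw [← hSe, Finset.card_image_of_injective _ (add_left_injective 1)]
    rw [hSo, hcard]
    ring
  · rw [Finset.disjoint_left]
    rintro x hx hy
    simp only [Finset.mem_image] at hx hy
    obtain ⟨a, -, ha⟩ := hx
    obtain ⟨b, -, hb⟩ := hy
    omega

lemma cntA_zero : cntA 0 = 1 := by decide
lemma cntB_zero : cntB 0 = 2 := by decide

lemma main_rec : ∀ n : ℕ, 3 * (cntA n : ℤ) = 2 ^ (n + 2) - (-1) ^ n ∧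
    3 * (cntA (n + 1) : ℤ) = 2 ^ (n + 3) - (-1) ^ (n + 1) := by
  intro n
  induction n with
  | zero =>
    have h1 : cntA 1 = cntA 0 + cntB 0 := A_succ 0
    rw [cntA_zero, cntB_zero] at h1
    rw [cntA_zero, h1]
    norm_num
  | succ n ih =>
    refine ⟨ih.2, ?_⟩
    have h1 : cntA (n + 2) = cntA (n + 1) + cntB (n + 1) := A_succ (n + 1)
    have h2 : cntB (n + 1) = 2 * cntA n := B_succ n
    have h3 := ih.1
    have h4 := ih.2
    rw [h2] at h1
    have h5 : (cntA (n+2) : ℤ) = (cntA (n+1) : ℤ) + 2 * (cntA n : ℤ) := by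
      exact_mod_cast congrArg (Nat.cast : ℕ → ℤ) h1
    have hpow : ((-1:ℤ)) ^ (n + 2) = (-1) ^ n := by
      rw [pow_succ, pow_succ]; ring
    have hpow2 : ((-1:ℤ)) ^ (n + 1) = -(-1) ^ n := by
      rw [pow_succ]; ring
    have hpow3 : ((-1:ℤ)) ^ (n + 3) = -(-1) ^ n := by
      rw [pow_succ, hpow]; ring
    have hpow4 : (2:ℤ) ^ (n + 4) = 4 * 2 ^ (n + 2) := by ring
    have hpow5 : (2:ℤ) ^ (n + 3) = 2 * 2 ^ (n + 2) := by ring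
    rw [show n + 1 + 1 = n + 2 by ring, show n + 1 + 2 = n + 3 by ring,
      show n + 1 + 3 = n + 4 by ring, show n + 1 + 1 = n + 2 by ring] at *
    rw [h5, hpow4, hpow]
    rw [hpow2, hpow5] at h4
    linarith

theorem ones_in_row_pow_two (n : ℕ) :
    3 * (((Finset.Icc (-(2 ^ n : ℤ) + 1) ((2 ^ n : ℤ) - 1)).filter
        (fun k => R (2 ^ n) k % 2 = 1)).card : ℤ) = 2 ^ (n + 2) - (-1) ^ n :=
  (main_rec n).1
end
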